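/- Suppose ℓ has L-Lipschitz gradient, satisfies the PL inequality with constant μ, and at each iteration the batch gradient noise satisfies E||e_t||² ≤ (θ²/(1-θ)²)E||∇ℓ(x_t)||² with β = (θ²+(1-θ)²)/(1-θ)². If the stepsize α_t satisfies 0 < α_t ≤ 1/(βL), then the Armijo condition holds in expectation: E[ℓ(x_{t+1})] ≤ E[ℓ(x_t)] - c α_t E||∇ℓ(x_t)||² for any 0 < c ≤ 1/2, where x_{t+1} = x_t - α_t ∇ℓ_B(x_t). -/

import Mathlib

open MeasureTheory
open scoped RealInnerProductSpace

/-- Under `L`-smoothness, the PL inequality, and the big batch noise bound, any stepsize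
`0 < α ≤ 1/(βL)` satisfies the Armijo condition in expectation:
`E[ℓ(x_{t+1})] ≤ E[ℓ(x_t)] - c α E‖∇ℓ(x_t)‖²` for any `0 < c ≤ 1/2`. -/
theorem big_batch_armijo_holds {d : ℕ} {Ω : Type*} [MeasurableSpace Ω]
    (P : Measure Ω) [IsProbabilityMeasure P]
    (ℓ : EuclideanSpace ℝ (Fin d) → ℝ) (g : EuclideanSpace ℝ (Fin d) → EuclideanSpace ℝ (Fin d))
    (L mu : ℝ) (hL : 0 < L) (hmu : 0 < mu)
    (hsmooth : ∀ x y, ℓ x ≤ ℓ y + ⟪g y, x - y⟫ + L / 2 * ‖x - y‖ ^ 2)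
    (xstar : EuclideanSpace ℝ (Fin d)) (hmin : ∀ x, ℓ xstar ≤ ℓ x)
    (hPL : ∀ x, 2 * mu * (ℓ x - ℓ xstar) ≤ ‖g x‖ ^ 2)
    (θ : ℝ) (hθ : θ ∈ Set.Ioo (0 : ℝ) 1)
    (β : ℝ) (hβ : β = (θ ^ 2 + (1 - θ) ^ 2) / (1 - θ) ^ 2)
    (xt : EuclideanSpace ℝ (Fin d))
    (e : Ω → EuclideanSpace ℝ (Fin d))
    (he : Integrable e P) (hemean : ∫ ω, e ω ∂P = 0)
    (he2 : Integrable (fun ω => ‖e ω‖ ^ 2) P)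
    (hnoise : ∫ ω, ‖e ω‖ ^ 2 ∂P ≤ θ ^ 2 / (1 - θ) ^ 2 * ‖g xt‖ ^ 2)
    (α : ℝ) (hα0 : 0 < α) (hα : α ≤ 1 / (β * L))
    (c : ℝ) (hc0 : 0 < c) (hc : c ≤ 1 / 2)
    (hint : Integrable (fun ω => ℓ (xt - α • (g xt + e ω))) P) :
    ∫ ω, ℓ (xt - α • (g xt + e ω)) ∂P ≤ ℓ xt - c * α * ‖g xt‖ ^ 2 := by
  obtain ⟨hθ0, hθ1⟩ := hθ
  have h1θ : (0:ℝ) < (1 - θ) ^ 2 := pow_pos (by linarith) 2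
  have hβ1 : 1 ≤ β := by
    rw [hβ, le_div_iff₀ h1θ]; nlinarith
  have hβL : 0 < β * L := mul_pos (by linarith) hL
  have hinner : Integrable (fun ω => ⟪g xt, e ω⟫) P := he.const_inner _
  have h1 : Integrable (fun ω => ℓ xt - α * ‖g xt‖ ^ 2 - α * ⟪g xt, e ω⟫) P :=
    (integrable_const _).sub (hinner.const_mul _)
  have h2a : Integrable (fun ω => ‖g xt‖ ^ 2 + 2 * ⟪g xt, e ω⟫) P :=
    (integrable_const _).add (hinner.const_mul _)
  have h2b : Integrable (fun ω => ‖g xt‖ ^ 2 + 2 * ⟪g xt, e ω⟫ + ‖e ω‖ ^ 2) P := h2a.add he2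
  have h2 : Integrable (fun ω =>
      L / 2 * α ^ 2 * (‖g xt‖ ^ 2 + 2 * ⟪g xt, e ω⟫ + ‖e ω‖ ^ 2)) P := h2b.const_mul _
  have hF : Integrable (fun ω =>
      ℓ xt - α * ‖g xt‖ ^ 2 - α * ⟪g xt, e ω⟫
        + L / 2 * α ^ 2 * (‖g xt‖ ^ 2 + 2 * ⟪g xt, e ω⟫ + ‖e ω‖ ^ 2)) P := h1.add h2
  have hpt : ∀ ω, ℓ (xt - α • (g xt + e ω)) ≤
      ℓ xt - α * ‖g xt‖ ^ 2 - α * ⟪g xt, e ω⟫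
        + L / 2 * α ^ 2 * (‖g xt‖ ^ 2 + 2 * ⟪g xt, e ω⟫ + ‖e ω‖ ^ 2) := by
    intro ω
    have := hsmooth (xt - α • (g xt + e ω)) xt
    have hxy : xt - α • (g xt + e ω) - xt = -(α • (g xt + e ω)) := by abel
    rw [hxy] at this
    have hnorm : ‖-(α • (g xt + e ω))‖ ^ 2
        = α ^ 2 * (‖g xt‖ ^ 2 + 2 * ⟪g xt, e ω⟫ + ‖e ω‖ ^ 2) := by
      rw [norm_neg, norm_smul, mul_pow, ← norm_add_sq_real]
      simp [abs_of_pos hα0, sq_abs]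
    have hip : ⟪g xt, -(α • (g xt + e ω))⟫
        = -(α * ‖g xt‖ ^ 2) - α * ⟪g xt, e ω⟫ := by
      rw [inner_neg_right, inner_smul_right, inner_add_right, real_inner_self_eq_norm_sq]
      ring
    rw [hnorm, hip] at this
    linarith [this]
  have hle := integral_mono hint hF hpt
  refine hle.trans ?_
  have hinner0 : ∫ ω, ⟪g xt, e ω⟫ ∂P = 0 := by
    rw [integral_inner he, hemean, inner_zero_right]
  have hcalc : ∫ ω, (ℓ xt - α * ‖g xt‖ ^ 2 - α * ⟪g xt, e ω⟫
        + L / 2 * α ^ 2 * (‖g xt‖ ^ 2 + 2 * ⟪g xt, e ω⟫ + ‖e ω‖ ^ 2)) ∂P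
      = ℓ xt - α * ‖g xt‖ ^ 2
        + L / 2 * α ^ 2 * (‖g xt‖ ^ 2 + ∫ ω, ‖e ω‖ ^ 2 ∂P) := by
    rw [integral_add h1 h2, integral_sub (integrable_const _) (hinner.const_mul _),
      integral_const, integral_const_mul, hinner0, integral_const_mul,
      integral_add h2a he2, integral_add (integrable_const _) (hinner.const_mul _),
      integral_const, integral_const_mul, hinner0]
    simp
  rw [hcalc]
  have hE : ∫ ω, ‖e ω‖ ^ 2 ∂P ≤ (β - 1) * ‖g xt‖ ^ 2 := by
    have hθβ : θ ^ 2 / (1 - θ) ^ 2 = β - 1 := by rw [hβ]; field_simp; ring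
    rw [hθβ] at hnoise; exact hnoise
  have hG0 : (0:ℝ) ≤ ‖g xt‖ ^ 2 := by positivity
  have hLa2 : (0:ℝ) ≤ L / 2 * α ^ 2 := by positivity
  have step1 : L / 2 * α ^ 2 * (‖g xt‖ ^ 2 + ∫ ω, ‖e ω‖ ^ 2 ∂P)
      ≤ L / 2 * α ^ 2 * (β * ‖g xt‖ ^ 2) := by
    apply mul_le_mul_of_nonneg_left _ hLa2
    nlinarith
  have hαβL : α * β * L ≤ 1 := by
    rw [le_div_iff₀ hβL] at hα; nlinarith
  nlinarith [mul_le_mul_of_nonneg_right hαβL (mul_nonneg (le_of_lt hα0) hG0),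
    mul_le_mul_of_nonneg_right hc (mul_nonneg (le_of_lt hα0) hG0)]
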